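/- Let n ≥ 2 be an integer, r > 0, and f : [0,r] → ℝ a C² function with f(0) = 0, f'(0) = 1, and f(t) > 0 for all t ∈ (0,r]. Let λ ∈ ℝ and let u : [0,r] → ℝ be C² with u(t) > 0 for t ∈ [0,r), u(r) = 0, u'(0) = 0, u' bounded on (0,r), and u''(t) + (n−1)(f'(t)/f(t))u'(t) + λ·u(t) = 0 on (0,r). Then u(t) = λ·T(u)(t) for all t ∈ [0,r]; in particular λ > 0 and the quotient h(t,u) = u(t)/T(u)(t) is constant, equal to λ, on [0,r). -/

import Mathlib

open Set intervalIntegral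
open MeasureTheory Filter

lemma c2_deriv_hasDerivAt {g : ℝ → ℝ} {x : ℝ} (h : ContDiffAt ℝ 2 g x) :
    HasDerivAt (deriv g) (deriv (deriv g) x) x := by
  obtain ⟨s, hs, hcd⟩ := h.contDiffOn le_rfl (by simp)
  obtain ⟨t, hts, ht, hxt⟩ := mem_nhds_iff.mp hs
  have h1 : ContDiffOn ℝ 1 (deriv g) t := (hcd.mono hts).deriv_of_isOpen ht le_rfl
  exact ((h1.differentiableOn (by norm_num)).differentiableAt (ht.mem_nhds hxt)).hasDerivAt

/-- The operator `T` from Barroso–Bessa: `T u t = ∫_t^r f(σ)^{-(n-1)} ∫_0^σ f(s)^{n-1} u(s) ds dσ`. -/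
noncomputable def BBop (n : ℕ) (r : ℝ) (f u : ℝ → ℝ) (t : ℝ) : ℝ :=
  ∫ σ in t..r, (1 / f σ ^ (n - 1)) * ∫ s in (0:ℝ)..σ, f s ^ (n - 1) * u s

/-- Equality case of Theorem 1 (converse direction): if `u` is a positive radial
Dirichlet eigenfunction with eigenvalue `λ`, then `u = λ · T(u)` on `[0,r]`; in particular
`λ > 0`. -/
theorem stmt7 (n : ℕ) (hn : 2 ≤ n) (r : ℝ) (hr : 0 < r)
    (f : ℝ → ℝ) (hf : ContDiffOn ℝ 2 f (Set.Icc 0 r))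
    (hf0 : f 0 = 0) (hf'0 : derivWithin f (Set.Icc 0 r) 0 = 1)
    (hfpos : ∀ t ∈ Set.Ioc (0:ℝ) r, 0 < f t)
    (lam : ℝ) (u : ℝ → ℝ) (hu : ContDiffOn ℝ 2 u (Set.Icc 0 r))
    (hupos : ∀ t ∈ Set.Ico (0:ℝ) r, 0 < u t) (hur : u r = 0)
    (hu'0 : derivWithin u (Set.Icc 0 r) 0 = 0)
    (hu'bdd : ∃ C : ℝ, ∀ t ∈ Set.Ioo (0:ℝ) r, |deriv u t| ≤ C)
    (huode : ∀ t ∈ Set.Ioo (0:ℝ) r,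
      deriv (deriv u) t + ((n : ℝ) - 1) * (deriv f t / f t) * deriv u t + lam * u t = 0) :
    (∀ t ∈ Set.Icc (0:ℝ) r, u t = lam * BBop n r f u t) ∧ 0 < lam := by
  have hIcc : UniqueDiffOn ℝ (Icc (0:ℝ) r) := uniqueDiffOn_Icc hr
  have hucont : ContinuousOn u (Icc 0 r) := hu.continuousOn
  have hfcont : ContinuousOn f (Icc 0 r) := hf.continuousOn
  set v : ℝ → ℝ := derivWithin u (Icc 0 r) with hv
  have hvcont : ContinuousOn v (Icc 0 r) :=
    hu.continuousOn_derivWithin hIcc (by norm_num)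
  have hmemnhds : ∀ σ ∈ Ioo (0:ℝ) r, Icc (0:ℝ) r ∈ nhds σ := fun σ hσ =>
    Icc_mem_nhds hσ.1 (hσ.2)
  have hvd : ∀ σ ∈ Ioo (0:ℝ) r, v σ = deriv u σ := fun σ hσ =>
    derivWithin_of_mem_nhds (hmemnhds σ hσ)
  -- the integrand w and primitive G
  set w : ℝ → ℝ := fun s => f s ^ (n - 1) * u s with hw
  have hwcont : ContinuousOn w (Icc 0 r) := (hfcont.pow _).mul hucont
  set G : ℝ → ℝ := fun σ => ∫ s in (0:ℝ)..σ, w s with hG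
  have hwint : ∀ σ ∈ Icc (0:ℝ) r, IntervalIntegrable w volume 0 σ := fun σ hσ =>
    (hwcont.mono (Icc_subset_Icc le_rfl hσ.2)).intervalIntegrable_of_Icc hσ.1
  have hGcont : ContinuousOn G (Icc 0 r) := by
    have := continuousOn_primitive_interval' (hwint r (right_mem_Icc.2 hr.le)) left_mem_uIcc
    rwa [uIcc_of_le hr.le] at this
  have hGds : ∀ σ ∈ Ioo (0:ℝ) r, HasDerivAt G (w σ) σ := by
    intro σ hσ
    refine integral_hasDerivAt_right (hwint σ (Ioo_subset_Icc_self hσ))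
      ?_ ((hwcont.continuousAt (hmemnhds σ hσ)))
    exact ⟨Icc 0 r, hmemnhds σ hσ, (hwcont.aestronglyMeasurable measurableSet_Icc)⟩
  -- step A: derivative of g = f^{n-1} * u'
  set g : ℝ → ℝ := fun σ => f σ ^ (n - 1) * deriv u σ with hgdef
  have hgderiv : ∀ σ ∈ Ioo (0:ℝ) r, HasDerivAt g (-(lam * w σ)) σ := by
    intro σ hσ
    have hfσ : 0 < f σ := hfpos σ ⟨hσ.1, hσ.2.le⟩
    have hfc2 : ContDiffAt ℝ 2 f σ := hf.contDiffAt (hmemnhds σ hσ)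
    have huc2 : ContDiffAt ℝ 2 u σ := hu.contDiffAt (hmemnhds σ hσ)
    have hfd : HasDerivAt f (deriv f σ) σ :=
      (hfc2.differentiableAt (by norm_num)).hasDerivAt
    have hud : HasDerivAt u (deriv u σ) σ :=
      (huc2.differentiableAt (by norm_num)).hasDerivAt
    have hudd : HasDerivAt (deriv u) (deriv (deriv u) σ) σ := c2_deriv_hasDerivAt huc2
    have hfp : HasDerivAt (fun t => f t ^ (n - 1))
        (((n:ℝ) - 1) * f σ ^ (n - 2) * deriv f σ) σ := by
      have := hfd.pow (n - 1)
      have h1 : ((n - 1 : ℕ) : ℝ) = (n : ℝ) - 1 := by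
        have := Nat.cast_sub (by omega : 1 ≤ n) (R := ℝ); simpa using this
      have h2 : n - 1 - 1 = n - 2 := by omega
      rwa [h1, h2] at this
    have hprod := hfp.mul hudd
    have hode := huode σ hσ
    refine hprod.congr_deriv ?_
    symm
    have hpow : f σ ^ (n - 1) = f σ ^ (n - 2) * f σ := by
      rw [← pow_succ]; congr 1; omega
    have hdd : deriv (deriv u) σ =
        -(((n : ℝ) - 1) * (deriv f σ / f σ) * deriv u σ) - lam * u σ := by linarith
    rw [hdd, hw, hpow]
    field_simp
    rw [hpow]
    ring
  -- constancy of h = g + lam * G on (0,r)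
  set h : ℝ → ℝ := fun σ => g σ + lam * G σ with hhdef
  have hhd : ∀ σ ∈ Ioo (0:ℝ) r, HasDerivAt h 0 σ := by
    intro σ hσ
    have := (hgderiv σ hσ).add ((hGds σ hσ).const_mul lam)
    refine this.congr_deriv ?_
    ring
  have hhconst : ∀ σ₁ ∈ Ioo (0:ℝ) r, ∀ σ₂ ∈ Ioo (0:ℝ) r, h σ₁ = h σ₂ := by
    have key : ∀ σ₁ ∈ Ioo (0:ℝ) r, ∀ σ₂ ∈ Ioo (0:ℝ) r, σ₁ ≤ σ₂ → h σ₁ = h σ₂ := by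
      intro σ₁ h₁ σ₂ h₂ hle
      have : ∫ y in σ₁..σ₂, (0:ℝ) = h σ₂ - h σ₁ := by
        apply integral_eq_sub_of_hasDerivAt
        · intro x hx
          rw [uIcc_of_le hle] at hx
          exact hhd x ⟨lt_of_lt_of_le h₁.1 hx.1, lt_of_le_of_lt hx.2 h₂.2⟩
        · exact intervalIntegrable_const
      simp at this; linarith
    intro σ₁ h₁ σ₂ h₂
    rcases le_total σ₁ σ₂ with hc | hc
    · exact key σ₁ h₁ σ₂ h₂ hc
    · exact (key σ₂ h₂ σ₁ h₁ hc).symm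
  -- limit of h at 0⁺ is 0
  have hne : Ioo (0:ℝ) r ∈ nhdsWithin 0 (Ioo (0:ℝ) r) := self_mem_nhdsWithin
  have hNeBot : (nhdsWithin (0:ℝ) (Ioo 0 r)).NeBot := by
    rw [← mem_closure_iff_nhdsWithin_neBot, closure_Ioo hr.ne]
    exact ⟨le_rfl, hr.le⟩
  obtain ⟨C, hC⟩ := hu'bdd
  have hC0 : 0 ≤ max C 0 := le_max_right _ _
  have hftend : Tendsto (fun σ => f σ ^ (n - 1) * max C 0) (nhdsWithin 0 (Ioo 0 r)) (nhds 0) := by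
    have h1 : Tendsto f (nhdsWithin 0 (Ioo 0 r)) (nhds 0) := by
      have := (hfcont 0 (left_mem_Icc.2 hr.le)).tendsto
      rw [hf0] at this
      exact this.mono_left (nhdsWithin_mono 0 Ioo_subset_Icc_self)
    have h2 := (h1.pow (n - 1)).mul_const (max C 0)
    have : (0:ℝ) ^ (n - 1) * max C 0 = 0 := by
      rw [zero_pow (by omega : n - 1 ≠ 0), zero_mul]
    rwa [this] at h2
  have hgtend : Tendsto g (nhdsWithin 0 (Ioo 0 r)) (nhds 0) := by
    apply squeeze_zero_norm' _ hftend
    filter_upwards [hne] with σ hσ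
    have hfσ : 0 < f σ := hfpos σ ⟨hσ.1, hσ.2.le⟩
    have : |g σ| = f σ ^ (n - 1) * |deriv u σ| := by
      rw [hgdef, abs_mul, abs_of_pos (pow_pos hfσ _)]
    rw [Real.norm_eq_abs, this]
    exact mul_le_mul_of_nonneg_left (le_trans (hC σ hσ) (le_max_left _ _)) (pow_pos hfσ _).le
  have hGtend : Tendsto G (nhdsWithin 0 (Ioo 0 r)) (nhds 0) := by
    have := (hGcont 0 (left_mem_Icc.2 hr.le)).tendsto
    have hG0 : G 0 = 0 := by simp [hG]
    rw [hG0] at this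
    exact this.mono_left (nhdsWithin_mono 0 Ioo_subset_Icc_self)
  have hhtend : Tendsto h (nhdsWithin 0 (Ioo 0 r)) (nhds 0) := by
    have := hgtend.add (hGtend.const_mul lam)
    simpa using this
  have hhzero : ∀ σ ∈ Ioo (0:ℝ) r, h σ = 0 := by
    intro σ hσ
    have hconst : Tendsto h (nhdsWithin 0 (Ioo 0 r)) (nhds (h σ)) := by
      have : ∀ᶠ τ in nhdsWithin 0 (Ioo (0:ℝ) r), h τ = h σ := by
        filter_upwards [hne] with τ hτ; exact hhconst τ hτ σ hσ
      exact Tendsto.congr' (by filter_upwards [this] with τ hτ; exact hτ.symm) tendsto_const_nhds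
    exact tendsto_nhds_unique hconst hhtend
  -- so deriv u σ = -(lam * φ σ) on (0,r)
  set φ : ℝ → ℝ := fun σ => (1 / f σ ^ (n - 1)) * G σ with hφ
  have hderiv_u : ∀ σ ∈ Ioo (0:ℝ) r, deriv u σ = -(lam * φ σ) := by
    intro σ hσ
    have hfσ : 0 < f σ := hfpos σ ⟨hσ.1, hσ.2.le⟩
    have h0 := hhzero σ hσ
    have hfne : f σ ^ (n - 1) ≠ 0 := (pow_pos hfσ _).ne'
    rw [hhdef] at h0
    simp only [hgdef, hφ] at *
    field_simp
    linarith
  -- main formula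
  have main : ∀ t ∈ Icc (0:ℝ) r, u t = lam * BBop n r f u t := by
    intro t ht
    have hsub : Icc t r ⊆ Icc 0 r := Icc_subset_Icc ht.1 le_rfl
    have hFTC : ∫ y in t..r, v y = u r - u t := by
      apply integral_eq_sub_of_hasDeriv_right_of_le ht.2 (hucont.mono hsub)
      · intro x hx
        have hx' : x ∈ Ioo (0:ℝ) r := ⟨lt_of_le_of_lt ht.1 hx.1, hx.2⟩
        have : HasDerivAt u (deriv u x) x :=
          ((hu.contDiffAt (hmemnhds x hx')).differentiableAt (by norm_num)).hasDerivAt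
        rw [hvd x hx']
        exact this.hasDerivWithinAt
      · exact (hvcont.mono hsub).intervalIntegrable_of_Icc ht.2
    have hae : ∀ᵐ x ∂(volume : Measure ℝ), x ∈ Set.uIoc t r → v x = -(lam * φ x) := by
      have hr' : ∀ᵐ x ∂(volume : Measure ℝ), x ≠ r := by
        rw [ae_iff]
        simpa using measure_singleton (α := ℝ) r
      filter_upwards [hr'] with x hxr hx
      rw [uIoc_of_le ht.2] at hx
      have hx' : x ∈ Ioo (0:ℝ) r := ⟨lt_of_le_of_lt ht.1 hx.1, lt_of_le_of_ne hx.2 hxr⟩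
      rw [hvd x hx', hderiv_u x hx']
    have hcongr : ∫ y in t..r, v y = ∫ y in t..r, -(lam * φ y) :=
      integral_congr_ae hae
    have hmul : ∫ y in t..r, -(lam * φ y) = -lam * ∫ y in t..r, φ y := by
      rw [← intervalIntegral.integral_const_mul]
      congr 1; funext y; ring
    have hBB : BBop n r f u t = ∫ y in t..r, φ y := rfl
    rw [hcongr, hmul, hBB.symm] at hFTC
    rw [hur] at hFTC
    linarith
  refine ⟨main, ?_⟩
  -- positivity of lam
  have ht0 : r / 2 ∈ Icc (0:ℝ) r := ⟨by linarith, by linarith⟩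
  have ht0' : r / 2 ∈ Ioo (0:ℝ) r := ⟨by linarith, by linarith⟩
  have hu0 : 0 < u (r / 2) := hupos _ ⟨ht0.1, ht0'.2⟩
  have hBpos : 0 < BBop n r f u (r / 2) := by
    have hφcont : ContinuousOn φ (Icc (r/2) r) := by
      apply ContinuousOn.mul
      · apply ContinuousOn.div continuousOn_const
        · exact (hfcont.mono (Icc_subset_Icc ht0.1 le_rfl)).pow _
        · intro x hx
          exact (pow_pos (hfpos x ⟨lt_of_lt_of_le ht0'.1 hx.1, hx.2⟩) _).ne'
      · exact hGcont.mono (Icc_subset_Icc ht0.1 le_rfl)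
    apply intervalIntegral_pos_of_pos_on (hφcont.intervalIntegrable_of_Icc ht0.2)
    · intro x hx
      have hxI : x ∈ Ioo (0:ℝ) r := ⟨lt_trans ht0'.1 hx.1, hx.2⟩
      have hfx : 0 < f x := hfpos x ⟨hxI.1, hxI.2.le⟩
      have hGpos : 0 < G x := by
        apply intervalIntegral_pos_of_pos_on (hwint x ⟨hxI.1.le, hxI.2.le⟩) _ hxI.1
        intro s hs
        have hsr : s ∈ Ico (0:ℝ) r := ⟨hs.1.le, lt_trans hs.2 hxI.2⟩
        exact mul_pos (pow_pos (hfpos s ⟨hs.1, hsr.2.le⟩) _) (hupos s hsr)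
      exact mul_pos (by positivity) hGpos
    · exact ht0'.2
  have := main (r/2) ht0
  by_contra hlam
  push_neg at hlam
  have : lam * BBop n r f u (r/2) ≤ 0 :=
    mul_nonpos_of_nonpos_of_nonneg hlam hBpos.le
  linarith
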